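/- The following statements are equivalent: (1) Spec_S R with the S-flat topology is a T₀ space; (2) every S-prime ideal of R is a prime ideal. -/

import Mathlib

/-- An ideal `P` is `S`-prime if `P ∩ S = ∅` and there is `s ∈ S` such that
whenever `a * b ∈ P`, either `s * a ∈ P` or `s * b ∈ P`. -/
def IsSPrime {R : Type*} [CommRing R] (S : Set R) (P : Ideal R) : Prop :=
  (P : Set R) ∩ S = ∅ ∧ ∃ s ∈ S, ∀ a b : R, a * b ∈ P → s * a ∈ P ∨ s * b ∈ P

/-- The `S`-prime spectrum `Spec_S R`: the set of all `S`-prime ideals of `R`. -/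
def SSpec {R : Type*} [CommRing R] (S : Set R) : Type _ :=
  {P : Ideal R // IsSPrime S P}

/-- The `S`-variety of an ideal `I`:
`V_S(I) = {P ∈ Spec_S R | s • I ⊆ P for some s ∈ S}`. -/
def SVar {R : Type*} [CommRing R] (S : Set R) (I : Ideal R) : Set (SSpec S) :=
  {P | ∃ s ∈ S, ∀ x ∈ I, s * x ∈ P.1}

/-- The `S`-radical of an ideal `I`:
`√[S](I) = {a ∈ R | s * a ^ n ∈ I for some s ∈ S, n ∈ ℕ}`. -/
def SRad {R : Type*} [CommRing R] (S : Set R) (I : Ideal R) : Set R :=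
  {a | ∃ s ∈ S, ∃ n : ℕ, s * a ^ n ∈ I}

/-- The `S`-Zariski topology on `Spec_S R`: the closed sets are exactly the `V_S(I)`. -/
def sZariskiTop {R : Type*} [CommRing R] (S : Set R) : TopologicalSpace (SSpec S) :=
  TopologicalSpace.generateFrom {U | ∃ I : Ideal R, U = (SVar S I)ᶜ}

/-- The `S`-flat topology on `Spec_S R`: the coarsest topology in which every
`V_S(f)`, `f ∈ R`, is open. -/
def sFlatTop {R : Type*} [CommRing R] (S : Set R) : TopologicalSpace (SSpec S) :=
  TopologicalSpace.generateFrom {U | ∃ f : R, U = SVar S (Ideal.span {f})}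

/-- An ideal `I` is `S`-radically finite if `√[S](I) = √[S](J)` for some finitely
generated ideal `J`. -/
def SRadFinite {R : Type*} [CommRing R] (S : Set R) (I : Ideal R) : Prop :=
  ∃ J : Ideal R, J.FG ∧ SRad S I = SRad S J


section Aux

variable {R : Type*} [CommRing R] {S : Set R}

/-- The saturation of an ideal with respect to `S`. -/
def satIdeal (hS1 : (1 : R) ∈ S) (hSmul : ∀ s ∈ S, ∀ t ∈ S, s * t ∈ S) (P : Ideal R) :
    Ideal R where
  carrier := {f | ∃ s ∈ S, s * f ∈ P}
  zero_mem' := ⟨1, hS1, by simp⟩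
  add_mem' := by
    rintro a b ⟨s, hs, hsa⟩ ⟨t, ht, htb⟩
    refine ⟨s * t, hSmul s hs t ht, ?_⟩
    have h : s * t * (a + b) = t * (s * a) + s * (t * b) := by ring
    rw [h]
    exact P.add_mem (P.mul_mem_left _ hsa) (P.mul_mem_left _ htb)
  smul_mem' := by
    rintro c a ⟨s, hs, hsa⟩
    refine ⟨s, hs, ?_⟩
    have h : s * (c • a) = c * (s * a) := by simp [smul_eq_mul]; ring
    rw [h]
    exact P.mul_mem_left _ hsa

lemma mem_satIdeal (hS1 : (1 : R) ∈ S) (hSmul : ∀ s ∈ S, ∀ t ∈ S, s * t ∈ S) (P : Ideal R)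
    (f : R) : f ∈ satIdeal hS1 hSmul P ↔ ∃ s ∈ S, s * f ∈ P := Iff.rfl

lemma satIdeal_isSPrime (hS1 : (1 : R) ∈ S) (hSmul : ∀ s ∈ S, ∀ t ∈ S, s * t ∈ S)
    {P : Ideal R} (hP : IsSPrime S P) : IsSPrime S (satIdeal hS1 hSmul P) := by
  obtain ⟨hdisj, s, hs, hsp⟩ := hP
  constructor
  · rw [Set.eq_empty_iff_forall_notMem]
    rintro x ⟨⟨t, ht, htx⟩, hxS⟩
    have : t * x ∈ (P : Set R) ∩ S := ⟨htx, hSmul t ht x hxS⟩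
    rw [hdisj] at this
    exact this
  · refine ⟨s, hs, fun a b hab => ?_⟩
    obtain ⟨t, ht, htab⟩ := hab
    have h1 : (t * a) * b ∈ P := by rw [show (t * a) * b = t * (a * b) by ring]; exact htab
    rcases hsp (t * a) b h1 with h | h
    · left
      exact ⟨t, ht, by rw [show t * (s * a) = s * (t * a) by ring]; exact h⟩
    · right
      exact ⟨1, hS1, by rw [one_mul]; exact h⟩

lemma satIdeal_idem (hS1 : (1 : R) ∈ S) (hSmul : ∀ s ∈ S, ∀ t ∈ S, s * t ∈ S) (P : Ideal R)
    (f : R) : (∃ s ∈ S, s * f ∈ satIdeal hS1 hSmul P) ↔ f ∈ satIdeal hS1 hSmul P := by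
  constructor
  · rintro ⟨t, ht, u, hu, hut⟩
    exact ⟨u * t, hSmul u hu t ht, by rw [mul_assoc]; exact hut⟩
  · intro h
    exact ⟨1, hS1, by rw [one_mul]; exact h⟩

lemma mem_SVar_span (P : SSpec S) (f : R) :
    P ∈ SVar S (Ideal.span {f}) ↔ ∃ s ∈ S, s * f ∈ P.1 := by
  constructor
  · rintro ⟨s, hs, h⟩
    exact ⟨s, hs, h f (Ideal.mem_span_singleton_self f)⟩
  · rintro ⟨s, hs, h⟩
    refine ⟨s, hs, fun x hx => ?_⟩
    obtain ⟨c, rfl⟩ := Ideal.mem_span_singleton'.mp hx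
    rw [show s * (c * f) = c * (s * f) by ring]
    exact P.1.mul_mem_left _ h

end Aux

theorem sFlat_t0_iff_sPrime_isPrime {R : Type*} [CommRing R] [Nontrivial R] (S : Set R)
    (hS0 : (0 : R) ∉ S) (hS1 : (1 : R) ∈ S) (hSmul : ∀ s ∈ S, ∀ t ∈ S, s * t ∈ S) :
    @T0Space (SSpec S) (sFlatTop S) ↔ ∀ P : Ideal R, IsSPrime S P → P.IsPrime := by
  letI := sFlatTop S
  constructor
  · intro hT0 P hP
    set Q : Ideal R := satIdeal hS1 hSmul P with hQdef
    have hQ : IsSPrime S Q := satIdeal_isSPrime hS1 hSmul hP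
    set x : SSpec S := ⟨P, hP⟩
    set y : SSpec S := ⟨Q, hQ⟩
    -- x and y are inseparable
    have key : ∀ U : Set (SSpec S),
        TopologicalSpace.GenerateOpen {U | ∃ f : R, U = SVar S (Ideal.span {f})} U →
        (x ∈ U ↔ y ∈ U) := by
      intro U hU
      induction hU with
      | basic V hV =>
        obtain ⟨f, rfl⟩ := hV
        rw [mem_SVar_span, mem_SVar_span]
        show (∃ s ∈ S, s * f ∈ P) ↔ ∃ s ∈ S, s * f ∈ Q
        rw [satIdeal_idem hS1 hSmul P f]
        exact Iff.rfl
      | univ => simp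
      | inter V W _ _ ihV ihW => simp [ihV, ihW]
      | sUnion T _ ih => simp only [Set.mem_sUnion]; exact ⟨fun ⟨t, ht, hx⟩ => ⟨t, ht, (ih t ht).mp hx⟩, fun ⟨t, ht, hy⟩ => ⟨t, ht, (ih t ht).mpr hy⟩⟩
    have hins : Inseparable x y := by
      rw [inseparable_iff_forall_isOpen]
      intro U hU
      exact key U hU
    have hxy : x = y := hT0.t0 hins
    have hPQ : P = Q := congrArg Subtype.val hxy
    obtain ⟨hdisj, s, hs, hsp⟩ := hP
    constructor
    · intro htop
      have h1 : (1 : R) ∈ P := htop ▸ Submodule.mem_top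
      have : (1 : R) ∈ (P : Set R) ∩ S := ⟨h1, hS1⟩
      rw [hdisj] at this
      exact this
    · intro a b hab
      rcases hsp a b hab with h | h
      · left; rw [hPQ]; exact ⟨s, hs, h⟩
      · right; rw [hPQ]; exact ⟨s, hs, h⟩
  · intro h
    refine ⟨fun x y hxy => ?_⟩
    have hopen : ∀ f : R, IsOpen (SVar S (Ideal.span {f})) :=
      fun f => TopologicalSpace.GenerateOpen.basic _ ⟨f, rfl⟩
    have hx : x.1.IsPrime := h x.1 x.2
    have hy : y.1.IsPrime := h y.1 y.2
    have hmem : ∀ (z : SSpec S), z.1.IsPrime → ∀ f : R,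
        z ∈ SVar S (Ideal.span {f}) ↔ f ∈ z.1 := by
      intro z hz f
      rw [mem_SVar_span]
      constructor
      · rintro ⟨s, hs, hsf⟩
        rcases hz.mem_or_mem hsf with hsP | hfP
        · exfalso
          have : s ∈ (z.1 : Set R) ∩ S := ⟨hsP, hs⟩
          rw [z.2.1] at this
          exact this
        · exact hfP
      · intro hf
        exact ⟨1, hS1, by rw [one_mul]; exact hf⟩
    apply Subtype.ext
    apply Ideal.ext
    intro f
    rw [← hmem x hx f, ← hmem y hy f]
    exact hxy.mem_open_iff (hopen f)
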